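/- arXiv:1905.12842 — 2 statements merged into one kernel-verified Lean document; each statement's English description precedes it below -/
import Mathlib

section
/- Suppose B ⪯ A₁ ⪯ A₂ are positive definite matrices. Then δ_∞(A₁, B) ≤ δ_∞(A₂, B). -/
open Matrix MeasureTheory ProbabilityTheory
open scoped Classical RealInnerProductSpace

/-- Operator (spectral) norm of a real matrix. -/
noncomputable def opNorm {m n : Type*} [Fintype m] [Fintype n] [DecidableEq n]
    (A : Matrix m n ℝ) : ℝ :=
  ‖LinearMap.toContinuousLinearMap (Matrix.toEuclideanLin A)‖

/-- Frobenius norm of a real matrix. -/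
noncomputable def frob {m n : Type*} [Fintype m] [Fintype n] (A : Matrix m n ℝ) : ℝ :=
  Real.sqrt (∑ i, ∑ j, (A i j) ^ 2)

/-- Positive semidefinite square root (junk value `0` off the PSD matrices). -/
noncomputable def sqrtPD {n : Type*} [Fintype n] [DecidableEq n]
    (A : Matrix n n ℝ) : Matrix n n ℝ :=
  if h : A.PosSemidef then
    (h.1.eigenvectorUnitary : Matrix n n ℝ) *
      Matrix.diagonal ((RCLike.ofReal : ℝ → ℝ) ∘ Real.sqrt ∘ h.1.eigenvalues) *
      (star h.1.eigenvectorUnitary : Matrix n n ℝ)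
  else 0

/-- Matrix logarithm of a hermitian matrix via the spectral theorem
(junk value `0` off the hermitian matrices). -/
noncomputable def mlog {n : Type*} [Fintype n] [DecidableEq n]
    (A : Matrix n n ℝ) : Matrix n n ℝ :=
  if h : A.IsHermitian then
    (h.eigenvectorUnitary : Matrix n n ℝ) * Matrix.diagonal (Real.log ∘ h.eigenvalues) *
      (star (h.eigenvectorUnitary : Matrix n n ℝ))
  else 0

/-- Thompson (invariant) metric `δ∞(A,B) = ‖log (A^{-1/2} B A^{-1/2})‖`. -/
noncomputable def thompson {n : Type*} [Fintype n] [DecidableEq n]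
    (A B : Matrix n n ℝ) : ℝ :=
  opNorm (mlog ((sqrtPD A)⁻¹ * B * (sqrtPD A)⁻¹))

/-- Largest (real) eigenvalue. -/
noncomputable def lamMax {n : Type*} [Fintype n] [DecidableEq n] (A : Matrix n n ℝ) : ℝ :=
  sSup (spectrum ℝ A)

/-- Smallest (real) eigenvalue. -/
noncomputable def lamMin {n : Type*} [Fintype n] [DecidableEq n] (A : Matrix n n ℝ) : ℝ :=
  sInf (spectrum ℝ A)

/-- Solution `P = Σ_{k≥0} (Lᵀ)^k M L^k` of the discrete Lyapunov equation `P = Lᵀ P L + M`. -/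
noncomputable def dlyap {n : Type*} [Fintype n] [DecidableEq n]
    (L M : Matrix n n ℝ) : Matrix n n ℝ :=
  ∑' k : ℕ, (L ^ k)ᵀ * M * (L ^ k)

/-- `K` stabilizes `(A,B)`: the closed loop matrix `A + BK` has spectral radius `< 1`. -/
def Stabilizes {n d : Type*} [Fintype n] [DecidableEq n] [Fintype d]
    (A : Matrix n n ℝ) (B : Matrix n d ℝ) (K : Matrix d n ℝ) : Prop :=
  ∀ z ∈ spectrum ℂ ((A + B * K).map ((↑) : ℝ → ℂ)), ‖z‖ < 1

section ThompsonAux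

set_option maxHeartbeats 1000000
set_option synthInstance.maxHeartbeats 400000

open scoped Matrix.Norms.L2Operator

variable {n : Type*} [Fintype n] [DecidableEq n]

lemma opNorm_eq_norm (A : Matrix n n ℝ) : opNorm A = ‖A‖ := rfl

lemma norm_unitary_conj (U : Matrix.unitaryGroup n ℝ) (A : Matrix n n ℝ) :
    ‖(U : Matrix n n ℝ) * A * star (U : Matrix n n ℝ)‖ = ‖A‖ := by
  rw [mul_assoc, ← Unitary.coe_star, CStarRing.norm_coe_unitary_mul,
    CStarRing.norm_mul_coe_unitary]

lemma norm_diagonal_le {M : ℝ} (d : n → ℝ) (hM : 0 ≤ M) (h : ∀ i, |d i| ≤ M) :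
    ‖(Matrix.diagonal d : Matrix n n ℝ)‖ ≤ M := by
  rw [Matrix.l2_opNorm_def]
  refine ContinuousLinearMap.opNorm_le_bound _ hM fun x => ?_
  have hx : ∀ (y : EuclideanSpace ℝ n), ‖y‖ = Real.sqrt (∑ i, (y i)^2) := fun y => by
    rw [EuclideanSpace.norm_eq]
    congr 1
    exact Finset.sum_congr rfl fun i _ => by rw [Real.norm_eq_abs, sq_abs]
  have happ : ∀ i, ((Matrix.toEuclideanLin.trans LinearMap.toContinuousLinearMap)
      (Matrix.diagonal d) x) i = d i * x i := fun i => by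
    simp [Matrix.toEuclideanLin_apply, Matrix.mulVec_diagonal]
  rw [hx, hx]
  simp_rw [happ]
  rw [← Real.sqrt_sq hM, ← Real.sqrt_mul (sq_nonneg M), Finset.mul_sum]
  apply Real.sqrt_le_sqrt
  apply Finset.sum_le_sum
  intro i _
  rw [mul_pow]
  apply mul_le_mul_of_nonneg_right _ (sq_nonneg _)
  rw [← sq_abs (d i)]
  exact pow_le_pow_left₀ (abs_nonneg _) (h i) 2

lemma abs_le_norm_diagonal (d : n → ℝ) (i : n) :
    |d i| ≤ ‖(Matrix.diagonal d : Matrix n n ℝ)‖ := by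
  rw [Matrix.l2_opNorm_def]
  have h := ((Matrix.toEuclideanLin.trans LinearMap.toContinuousLinearMap)
      (Matrix.diagonal d)).le_opNorm (EuclideanSpace.single i 1)
  have h1 : (Matrix.toEuclideanLin.trans LinearMap.toContinuousLinearMap)
      (Matrix.diagonal d) (EuclideanSpace.single i 1) = EuclideanSpace.single i (d i) := by
    apply PiLp.ext
    intro j
    show (Matrix.diagonal d *ᵥ _) j = _
    rw [Matrix.mulVec_diagonal]
    rcases eq_or_ne j i with rfl | hj
    · simp [EuclideanSpace.single_apply]
    · simp [EuclideanSpace.single_apply, hj]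
  rw [h1, EuclideanSpace.norm_single, EuclideanSpace.norm_single] at h
  simpa using h

lemma eig_ge {C : Matrix n n ℝ} (hC : C.IsHermitian) {μ : ℝ}
    (h : (C - μ • 1).PosSemidef) (i : n) : μ ≤ hC.eigenvalues i := by
  have hv := hC.mulVec_eigenvectorBasis i
  set v : n → ℝ := ⇑(hC.eigenvectorBasis i) with hvdef
  have hv0 : v ≠ 0 := by
    intro h0
    exact hC.eigenvectorBasis.orthonormal.ne_zero i (by ext j; exact congrFun h0 j)
  have h2 := h.re_dotProduct_nonneg v
  have hcalc : star v ⬝ᵥ ((C - μ • 1) *ᵥ v) = (hC.eigenvalues i - μ) * (v ⬝ᵥ v) := by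
    rw [sub_mulVec, smul_mulVec, one_mulVec, hv, star_trivial,
      dotProduct_sub, dotProduct_smul, dotProduct_smul, sub_mul, smul_eq_mul, smul_eq_mul]
  rw [hcalc] at h2
  simp only [RCLike.re_to_real] at h2
  have hvv : 0 < v ⬝ᵥ v := by
    have := dotProduct_star_self_pos_iff (v := v)
    rw [star_trivial] at this
    exact this.mpr hv0
  nlinarith

lemma eig_le {C : Matrix n n ℝ} (hC : C.IsHermitian) {μ : ℝ}
    (h : (μ • 1 - C).PosSemidef) (i : n) : hC.eigenvalues i ≤ μ := by
  have hv := hC.mulVec_eigenvectorBasis i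
  set v : n → ℝ := ⇑(hC.eigenvectorBasis i) with hvdef
  have hv0 : v ≠ 0 := by
    intro h0
    exact hC.eigenvectorBasis.orthonormal.ne_zero i (by ext j; exact congrFun h0 j)
  have h2 := h.re_dotProduct_nonneg v
  have hcalc : star v ⬝ᵥ ((μ • 1 - C) *ᵥ v) = (μ - hC.eigenvalues i) * (v ⬝ᵥ v) := by
    rw [sub_mulVec, smul_mulVec, one_mulVec, hv, star_trivial,
      dotProduct_sub, dotProduct_smul, dotProduct_smul, sub_mul, smul_eq_mul, smul_eq_mul]
  rw [hcalc] at h2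
  simp only [RCLike.re_to_real] at h2
  have hvv : 0 < v ⬝ᵥ v := by
    have := dotProduct_star_self_pos_iff (v := v)
    rw [star_trivial] at this
    exact this.mpr hv0
  nlinarith

lemma psd_smul {μ : ℝ} {M : Matrix n n ℝ} (hμ : 0 ≤ μ) (hM : M.PosSemidef) :
    (μ • M).PosSemidef := by
  refine ⟨?_, fun x => ?_⟩
  · unfold Matrix.IsHermitian
    rw [conjTranspose_smul, hM.1.eq]
    simp
  · have := hM.2 x
    have e : (x.sum fun i xi => x.sum fun j xj => star xi * (μ • M) i j * xj) =
        μ * x.sum fun i xi => x.sum fun j xj => star xi * M i j * xj := by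
      simp only [Finsupp.mul_sum]
      apply Finsupp.sum_congr
      intro i _
      apply Finsupp.sum_congr
      intro j _
      simp only [Matrix.smul_apply, smul_eq_mul]
      ring
    rw [e]
    exact mul_nonneg hμ this

lemma psd_sub_smul {C : Matrix n n ℝ} (hC : C.IsHermitian) {μ : ℝ}
    (h : ∀ i, μ ≤ hC.eigenvalues i) : (C - μ • 1).PosSemidef := by
  have hU := hC.eigenvectorUnitary.prop
  rw [Unitary.mem_iff] at hU
  have key : C - μ • 1 =
      (hC.eigenvectorUnitary : Matrix n n ℝ) * diagonal (fun i => hC.eigenvalues i - μ) *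
        (hC.eigenvectorUnitary : Matrix n n ℝ)ᴴ := by
    have hd : diagonal (fun i => hC.eigenvalues i - μ) =
        diagonal (RCLike.ofReal ∘ hC.eigenvalues) - μ • 1 := by
      ext j k
      rcases eq_or_ne j k with rfl | hjk <;>
        simp [Matrix.diagonal_apply, Matrix.one_apply, *]
    rw [hd, mul_sub, sub_mul]
    rw [← Matrix.star_eq_conjTranspose]
    have hs := hC.spectral_theorem
    simp only [Unitary.conjStarAlgAut_apply, Unitary.coe_star] at hs
    rw [← hs]
    congr 1
    rw [Matrix.mul_smul, Matrix.smul_mul, mul_one, hU.2]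
  rw [key]
  exact (posSemidef_diagonal_iff.mpr fun i => sub_nonneg.mpr (h i)).mul_mul_conjTranspose_same _

lemma sqrtPD_facts {A : Matrix n n ℝ} (hA : A.PosDef) :
    (sqrtPD A).IsHermitian ∧ sqrtPD A * sqrtPD A = A ∧ IsUnit (sqrtPD A).det := by
  have hP := hA.posSemidef
  have h1 : sqrtPD A = (hP.1.eigenvectorUnitary : Matrix n n ℝ) *
      Matrix.diagonal ((RCLike.ofReal : ℝ → ℝ) ∘ Real.sqrt ∘ hP.1.eigenvalues) *
      (star hP.1.eigenvectorUnitary : Matrix n n ℝ) := dif_pos hP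
  have hs := hP.1.spectral_theorem
  rw [Unitary.conjStarAlgAut_apply] at hs
  have hU : (star hP.1.eigenvectorUnitary : Matrix n n ℝ) * hP.1.eigenvectorUnitary = 1 :=
    Unitary.coe_star_mul_self _
  have hmul : sqrtPD A * sqrtPD A = A := by
    rw [h1]
    calc _ = (hP.1.eigenvectorUnitary : Matrix n n ℝ) *
          (Matrix.diagonal ((RCLike.ofReal : ℝ → ℝ) ∘ Real.sqrt ∘ hP.1.eigenvalues) *
          ((star hP.1.eigenvectorUnitary : Matrix n n ℝ) * hP.1.eigenvectorUnitary) *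
          Matrix.diagonal ((RCLike.ofReal : ℝ → ℝ) ∘ Real.sqrt ∘ hP.1.eigenvalues)) *
          (star hP.1.eigenvectorUnitary : Matrix n n ℝ) := by simp only [Matrix.mul_assoc]
      _ = A := by
        rw [hU, Matrix.mul_one, diagonal_mul_diagonal]
        have hD : (diagonal fun i => ((RCLike.ofReal : ℝ → ℝ) ∘ Real.sqrt ∘ hP.1.eigenvalues) i *
            ((RCLike.ofReal : ℝ → ℝ) ∘ Real.sqrt ∘ hP.1.eigenvalues) i) =
            diagonal ((RCLike.ofReal : ℝ → ℝ) ∘ hP.1.eigenvalues) := by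
          congr 1
          funext i
          simp [Real.mul_self_sqrt (hP.eigenvalues_nonneg i)]
        rw [hD]
        exact hs.symm
  have hherm : (sqrtPD A).IsHermitian := by
    rw [h1, Matrix.star_eq_conjTranspose]
    exact ((posSemidef_diagonal_iff.mpr fun i => by simpa using Real.sqrt_nonneg _).mul_mul_conjTranspose_same _).1
  refine ⟨hherm, hmul, ?_⟩
  have hdet : (sqrtPD A).det * (sqrtPD A).det = A.det := by rw [← det_mul, hmul]
  have h0 : A.det ≠ 0 := hA.det_pos.ne'
  exact isUnit_iff_ne_zero.mpr fun h => h0 (by rw [← hdet, h, mul_zero])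

lemma conj_facts {A : Matrix n n ℝ} (hA : A.PosDef) :
    (sqrtPD A)⁻¹ * A * (sqrtPD A)⁻¹ = 1 ∧
    ((sqrtPD A)⁻¹).IsHermitian ∧
    ∀ M : Matrix n n ℝ, sqrtPD A * ((sqrtPD A)⁻¹ * M * (sqrtPD A)⁻¹) * sqrtPD A = M := by
  obtain ⟨hh, hmul, hdet⟩ := sqrtPD_facts hA
  have hinv : sqrtPD A * (sqrtPD A)⁻¹ = 1 := mul_nonsing_inv _ hdet
  have hinv' : (sqrtPD A)⁻¹ * sqrtPD A = 1 := nonsing_inv_mul _ hdet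
  refine ⟨?_, hh.inv, fun M => ?_⟩
  · calc (sqrtPD A)⁻¹ * A * (sqrtPD A)⁻¹
        = (sqrtPD A)⁻¹ * (sqrtPD A * sqrtPD A) * (sqrtPD A)⁻¹ := by rw [hmul]
      _ = ((sqrtPD A)⁻¹ * sqrtPD A) * (sqrtPD A * (sqrtPD A)⁻¹) := by
          simp only [Matrix.mul_assoc]
      _ = 1 := by rw [hinv, hinv', one_mul]
  · calc sqrtPD A * ((sqrtPD A)⁻¹ * M * (sqrtPD A)⁻¹) * sqrtPD A
        = (sqrtPD A * (sqrtPD A)⁻¹) * M * ((sqrtPD A)⁻¹ * sqrtPD A) := by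
          simp only [Matrix.mul_assoc]
      _ = M := by rw [hinv, hinv', one_mul, mul_one]

lemma pair_facts {A B : Matrix n n ℝ} (hA : A.PosDef) (hB : B.PosDef)
    (hAB : (A - B).PosSemidef) :
    ∃ hC : ((sqrtPD A)⁻¹ * B * (sqrtPD A)⁻¹).IsHermitian,
      (∀ i, 0 < hC.eigenvalues i) ∧ (∀ i, hC.eigenvalues i ≤ 1) := by
  obtain ⟨hh, hmul, hdet⟩ := sqrtPD_facts hA
  obtain ⟨hone, hinvh, hconj⟩ := conj_facts hA
  set S := sqrtPD A with hS
  set C := S⁻¹ * B * S⁻¹ with hCdef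
  have hCpsd : C.PosSemidef := by
    have := hB.posSemidef.mul_mul_conjTranspose_same S⁻¹
    rwa [hinvh.eq] at this
  have hC : C.IsHermitian := hCpsd.1
  refine ⟨hC, fun i => ?_, fun i => ?_⟩
  · rcases lt_or_eq_of_le (hCpsd.eigenvalues_nonneg i) with h | h
    · exact h
    · exfalso
      have hdetC : C.det ≠ 0 := by
        rw [hCdef, det_mul, det_mul, det_nonsing_inv]
        have h1 : (S.det)⁻¹ ≠ 0 := by
          simpa using (isUnit_iff_ne_zero.mp hdet)
        exact mul_ne_zero (mul_ne_zero (by simpa using h1) hB.det_pos.ne') (by simpa using h1)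
      apply hdetC
      rw [hC.det_eq_prod_eigenvalues]
      refine Finset.prod_eq_zero (Finset.mem_univ i) ?_
      simp [← h]
  · have hpsd1 : ((1 : ℝ) • 1 - C).PosSemidef := by
      have heq : (1 : ℝ) • (1 : Matrix n n ℝ) - C = S⁻¹ * (A - B) * S⁻¹ := by
        rw [one_smul]
        rw [Matrix.mul_sub S⁻¹ A B, Matrix.sub_mul (S⁻¹ * A) (S⁻¹ * B) S⁻¹, hone]
      rw [heq]
      have h2 := hAB.mul_mul_conjTranspose_same S⁻¹
      rwa [hinvh.eq] at h2
    exact eig_le hC hpsd1 i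

lemma thompson_eq {A B : Matrix n n ℝ}
    (hC : ((sqrtPD A)⁻¹ * B * (sqrtPD A)⁻¹).IsHermitian) :
    thompson A B = ‖(Matrix.diagonal (Real.log ∘ hC.eigenvalues) : Matrix n n ℝ)‖ := by
  rw [thompson, mlog, dif_pos hC, opNorm_eq_norm]
  exact norm_unitary_conj hC.eigenvectorUnitary _


end ThompsonAux

section ThompsonMain

set_option maxHeartbeats 1000000
set_option synthInstance.maxHeartbeats 400000

open scoped Matrix.Norms.L2Operator

/-- Monotonicity of the Thompson metric along the Loewner order. -/
theorem thompson_mono {n : ℕ} (A₁ A₂ B : Matrix (Fin n) (Fin n) ℝ)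
    (hB : B.PosDef) (hA₁ : A₁.PosDef) (hA₂ : A₂.PosDef)
    (h₁ : (A₁ - B).PosSemidef) (h₂ : (A₂ - A₁).PosSemidef) :
    thompson A₁ B ≤ thompson A₂ B := by
  rcases Nat.eq_zero_or_pos n with rfl | hn
  · have : A₁ = A₂ := funext fun i => i.elim0
    rw [this]
  · have : Nonempty (Fin n) := ⟨⟨0, hn⟩⟩
    -- facts for the two pairs
    have h₂' : (A₂ - B).PosSemidef := by
      have : A₂ - B = (A₂ - A₁) + (A₁ - B) := by abel
      rw [this]; exact h₂.add h₁
    obtain ⟨hC₁, hpos₁, hle₁⟩ := pair_facts hA₁ hB h₁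
    obtain ⟨hC₂, hpos₂, hle₂⟩ := pair_facts hA₂ hB h₂'
    -- minimum eigenvalue of C₂
    obtain ⟨i₀, -, hmin⟩ := Finset.exists_min_image Finset.univ hC₂.eigenvalues
      ⟨Classical.arbitrary (Fin n), Finset.mem_univ _⟩
    set μ := hC₂.eigenvalues i₀ with hμdef
    have hμpos : 0 < μ := hpos₂ i₀
    have hμle1 : μ ≤ 1 := hle₂ i₀
    -- transfer the bound to C₁
    obtain ⟨hone₂, hinvh₂, hconj₂⟩ := conj_facts hA₂
    obtain ⟨hone₁, hinvh₁, hconj₁⟩ := conj_facts hA₁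
    obtain ⟨hh₂, hmul₂, hdet₂⟩ := sqrtPD_facts hA₂
    obtain ⟨hh₁, hmul₁, hdet₁⟩ := sqrtPD_facts hA₁
    have hC2psd : ((sqrtPD A₂)⁻¹ * B * (sqrtPD A₂)⁻¹ - μ • 1).PosSemidef :=
      psd_sub_smul hC₂ fun i => hmin i (Finset.mem_univ i)
    have hBA2 : (B - μ • A₂).PosSemidef := by
      have h3 := hC2psd.mul_mul_conjTranspose_same (sqrtPD A₂)
      rw [hh₂.eq] at h3
      have heq : sqrtPD A₂ * ((sqrtPD A₂)⁻¹ * B * (sqrtPD A₂)⁻¹ - μ • 1) * sqrtPD A₂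
          = B - μ • A₂ := by
        rw [Matrix.mul_sub _ _ (μ • 1), Matrix.sub_mul, hconj₂ B, Matrix.mul_smul,
          Matrix.smul_mul, mul_one, hmul₂]
      rwa [heq] at h3
    have hBA1 : (B - μ • A₁).PosSemidef := by
      have : B - μ • A₁ = (B - μ • A₂) + μ • (A₂ - A₁) := by
        rw [smul_sub]; abel
      rw [this]
      exact hBA2.add (psd_smul hμpos.le h₂)
    have hC1psd : ((sqrtPD A₁)⁻¹ * B * (sqrtPD A₁)⁻¹ - μ • 1).PosSemidef := by
      have h3 := hBA1.mul_mul_conjTranspose_same (sqrtPD A₁)⁻¹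
      rw [hinvh₁.eq] at h3
      have heq : (sqrtPD A₁)⁻¹ * (B - μ • A₁) * (sqrtPD A₁)⁻¹
          = (sqrtPD A₁)⁻¹ * B * (sqrtPD A₁)⁻¹ - μ • 1 := by
        rw [Matrix.mul_sub _ B (μ • A₁), Matrix.sub_mul, Matrix.mul_smul, Matrix.smul_mul,
          hone₁]
      rwa [heq] at h3
    have hge₁ : ∀ i, μ ≤ hC₁.eigenvalues i := eig_ge hC₁ hC1psd
    -- norm computation
    rw [thompson_eq hC₁, thompson_eq hC₂]
    have hlogμ : Real.log μ ≤ 0 := Real.log_nonpos hμpos.le hμle1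
    calc ‖(Matrix.diagonal (Real.log ∘ hC₁.eigenvalues) : Matrix (Fin n) (Fin n) ℝ)‖
        ≤ -Real.log μ := by
          apply norm_diagonal_le _ (by linarith)
          intro i
          have h4 : Real.log (hC₁.eigenvalues i) ≤ 0 :=
            Real.log_nonpos (hpos₁ i).le (hle₁ i)
          have h5 : Real.log μ ≤ Real.log (hC₁.eigenvalues i) :=
            Real.log_le_log hμpos (hge₁ i)
          rw [Function.comp_apply, abs_of_nonpos h4]
          linarith
      _ ≤ ‖(Matrix.diagonal (Real.log ∘ hC₂.eigenvalues) : Matrix (Fin n) (Fin n) ℝ)‖ := by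
          have h6 := abs_le_norm_diagonal (Real.log ∘ hC₂.eigenvalues) i₀
          rw [Function.comp_apply, ← hμdef, abs_of_nonpos hlogμ] at h6
          exact h6

end ThompsonMain
end

section
/- Suppose K₀ stabilizes (A,B) with ‖(A+BK₀)^k‖ ≤ τρ^k for all k ≥ 0, where τ ≥ 1 and ρ ∈ (0,1). If K satisfies ‖K − K₀‖ ≤ (1−ρ)/(2τ‖B‖), then ‖(A+BK)^k‖ ≤ τ((1+ρ)/2)^k for all k ≥ 0; in particular K stabilizes (A,B). -/
open Matrix MeasureTheory ProbabilityTheory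
open scoped Classical RealInnerProductSpace

lemma opNorm_nonneg {m n : Type*} [Fintype m] [Fintype n] [DecidableEq n]
    (A : Matrix m n ℝ) : 0 ≤ opNorm A := norm_nonneg _

lemma opNorm_add_le {m n : Type*} [Fintype m] [Fintype n] [DecidableEq n]
    (A B : Matrix m n ℝ) : opNorm (A + B) ≤ opNorm A + opNorm B := by
  unfold opNorm
  rw [map_add, map_add]
  exact norm_add_le _ _

lemma opNorm_mul_le {m n p : Type*} [Fintype m] [Fintype n] [Fintype p]
    [DecidableEq n] [DecidableEq p]
    (A : Matrix m n ℝ) (B : Matrix n p ℝ) : opNorm (A * B) ≤ opNorm A * opNorm B := by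
  unfold opNorm
  have h : LinearMap.toContinuousLinearMap (Matrix.toEuclideanLin (A * B)) =
      (LinearMap.toContinuousLinearMap (Matrix.toEuclideanLin A)).comp
        (LinearMap.toContinuousLinearMap (Matrix.toEuclideanLin B)) := by
    ext v
    simp [Matrix.toEuclideanLin_apply, Matrix.mulVec_mulVec]
  rw [h]
  exact ContinuousLinearMap.opNorm_comp_le _ _

lemma abs_entry_le_opNorm {m n : Type*} [Fintype m] [Fintype n] [DecidableEq n]
    (A : Matrix m n ℝ) (i : m) (j : n) : |A i j| ≤ opNorm A := by
  have hv : ‖(EuclideanSpace.single j (1:ℝ) : EuclideanSpace ℝ n)‖ = 1 := by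
    simp [EuclideanSpace.norm_single]
  have h1 : ‖(LinearMap.toContinuousLinearMap (Matrix.toEuclideanLin A))
      (EuclideanSpace.single j (1:ℝ))‖ ≤ opNorm A := by
    have := ContinuousLinearMap.le_opNorm
      (LinearMap.toContinuousLinearMap (Matrix.toEuclideanLin A))
      (EuclideanSpace.single j (1:ℝ))
    rwa [hv, mul_one] at this
  refine le_trans ?_ h1
  set w := (LinearMap.toContinuousLinearMap (Matrix.toEuclideanLin A))
      (EuclideanSpace.single j (1:ℝ)) with hw
  have hwi : w i = A i j := by
    simp only [hw, LinearMap.coe_toContinuousLinearMap', Matrix.toEuclideanLin_apply]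
    show (A *ᵥ _) i = A i j
    have : (EuclideanSpace.single j (1:ℝ)).ofLp = Pi.single j 1 := by
      rfl
    rw [this, Matrix.mulVec_single]
    simp
  rw [← hwi]
  have : ‖w‖ = Real.sqrt (∑ k, ‖w k‖ ^ 2) := EuclideanSpace.norm_eq w
  rw [this]
  have h2 : |w i| = Real.sqrt (‖w i‖ ^ 2) := by
    rw [Real.sqrt_sq_eq_abs]; simp [abs_abs, Real.norm_eq_abs]
  rw [h2]
  apply Real.sqrt_le_sqrt
  exact Finset.single_le_sum (f := fun k => ‖w k‖^2) (fun k _ => sq_nonneg _) (Finset.mem_univ i)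

lemma opNorm_sum_le {m n : Type*} [Fintype m] [Fintype n] [DecidableEq n]
    {ι : Type*} (s : Finset ι) (f : ι → Matrix m n ℝ) :
    opNorm (∑ i ∈ s, f i) ≤ ∑ i ∈ s, opNorm (f i) := by
  unfold opNorm
  rw [map_sum, map_sum]
  exact norm_sum_le _ _

lemma pow_expand {R : Type*} [Ring R] (X Y : R) :
    ∀ k : ℕ, (X + Y) ^ k
      = X ^ k + ∑ i ∈ Finset.range k, X ^ (k - 1 - i) * Y * (X + Y) ^ i := by
  intro k
  induction k with
  | zero => simp
  | succ k ih =>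
    have h : (X + Y) ^ (k + 1) = X * (X + Y) ^ k + Y * (X + Y) ^ k := by
      rw [pow_succ', add_mul]
    have h2 : X * (X + Y) ^ k
        = X ^ (k + 1) + ∑ i ∈ Finset.range k, X ^ (k - i) * Y * (X + Y) ^ i := by
      rw [ih, mul_add, Finset.mul_sum, ← pow_succ']
      congr 1
      refine Finset.sum_congr rfl fun i hi => ?_
      have hik : i < k := Finset.mem_range.mp hi
      have : k - 1 - i + 1 = k - i := by omega
      rw [← mul_assoc, ← mul_assoc, ← pow_succ', this]
    rw [h, h2, Finset.sum_range_succ]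
    have h3 : k + 1 - 1 - k = 0 := by omega
    have h4 : ∀ i ∈ Finset.range k, X ^ (k + 1 - 1 - i) * Y * (X + Y) ^ i
        = X ^ (k - i) * Y * (X + Y) ^ i := by
      intro i hi
      rfl
    rw [Finset.sum_congr rfl h4, h3, pow_zero, one_mul]
    ring_nf
    rw [add_assoc]

lemma pow_perturb_bound {N : Type*} [Fintype N] [DecidableEq N]
    (X Y : Matrix N N ℝ) (τ ρ r : ℝ)
    (hτ : 1 ≤ τ) (hρ0 : 0 ≤ ρ) (hρr : ρ ≤ r)
    (hX : ∀ k : ℕ, opNorm (X ^ k) ≤ τ * ρ ^ k)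
    (hY : τ * opNorm Y ≤ r - ρ) :
    ∀ k : ℕ, opNorm ((X + Y) ^ k) ≤ τ * r ^ k := by
  intro k
  induction k using Nat.strong_induction_on with
  | _ k ih =>
  set δ := opNorm Y with hδ
  have hδ0 : 0 ≤ δ := opNorm_nonneg Y
  have hr0 : 0 ≤ r := le_trans hρ0 hρr
  have hτ0 : 0 ≤ τ := le_trans zero_le_one hτ
  -- expansion
  have hex := pow_expand X Y k
  have step1 : opNorm ((X + Y) ^ k)
      ≤ opNorm (X ^ k) + ∑ i ∈ Finset.range k,
          opNorm (X ^ (k - 1 - i) * Y * (X + Y) ^ i) := by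
    rw [hex]
    exact le_trans (opNorm_add_le _ _) (by
      gcongr
      exact opNorm_sum_le _ _)
  have step2 : ∀ i ∈ Finset.range k,
      opNorm (X ^ (k - 1 - i) * Y * (X + Y) ^ i)
        ≤ τ * δ * τ * (ρ ^ (k - 1 - i) * r ^ i) := by
    intro i hi
    have hik : i < k := Finset.mem_range.mp hi
    have b1 : opNorm (X ^ (k - 1 - i) * Y * (X + Y) ^ i)
        ≤ opNorm (X ^ (k - 1 - i)) * opNorm Y * opNorm ((X + Y) ^ i) :=
      le_trans (opNorm_mul_le _ _)
        (mul_le_mul_of_nonneg_right (opNorm_mul_le _ _) (opNorm_nonneg _))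
    have b2 : opNorm (X ^ (k - 1 - i)) * opNorm Y * opNorm ((X + Y) ^ i)
        ≤ (τ * ρ ^ (k - 1 - i)) * δ * (τ * r ^ i) := by
      have e1 := hX (k - 1 - i)
      have e3 := ih i hik
      have p1 : (0:ℝ) ≤ τ * ρ ^ (k-1-i) := by positivity
      gcongr <;> first
        | exact opNorm_nonneg _
        | exact le_refl _
        | exact e1
        | exact e3
    refine le_trans b1 (le_trans b2 (le_of_eq ?_))
    ring
  have step3 : ∑ i ∈ Finset.range k, opNorm (X ^ (k - 1 - i) * Y * (X + Y) ^ i)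
      ≤ τ * δ * τ * ∑ i ∈ Finset.range k, ρ ^ (k - 1 - i) * r ^ i := by
    rw [Finset.mul_sum]
    exact Finset.sum_le_sum step2
  set S := ∑ i ∈ Finset.range k, ρ ^ (k - 1 - i) * r ^ i with hS
  have hSnn : 0 ≤ S := Finset.sum_nonneg fun i _ => by positivity
  have hgeom : S * (r - ρ) = r ^ k - ρ ^ k := by
    have := geom_sum₂_mul r ρ k
    rw [hS]
    rw [show (∑ i ∈ Finset.range k, ρ ^ (k - 1 - i) * r ^ i)
        = ∑ i ∈ Finset.range k, r ^ i * ρ ^ (k - 1 - i) from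
      Finset.sum_congr rfl fun i _ => mul_comm _ _]
    exact this
  have hmain : τ * δ * τ * S ≤ τ * (r ^ k - ρ ^ k) := by
    have h1 : (τ * δ) * S ≤ (r - ρ) * S := mul_le_mul_of_nonneg_right hY hSnn
    have h2 : τ * ((τ * δ) * S) ≤ τ * ((r - ρ) * S) := by
      exact mul_le_mul_of_nonneg_left h1 hτ0
    calc τ * δ * τ * S = τ * ((τ * δ) * S) := by ring
      _ ≤ τ * ((r - ρ) * S) := h2
      _ = τ * (S * (r - ρ)) := by ring
      _ = τ * (r ^ k - ρ ^ k) := by rw [hgeom]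
  have hXk := hX k
  have := le_trans step1 (by linarith [step3] : opNorm (X ^ k) + ∑ i ∈ Finset.range k,
      opNorm (X ^ (k - 1 - i) * Y * (X + Y) ^ i) ≤ τ * ρ ^ k + τ * δ * τ * S)
  linarith

lemma norm_lt_one_of_pow_bound {n : ℕ} (M : Matrix (Fin n) (Fin n) ℝ) (C r : ℝ)
    (hC : 0 ≤ C) (hr0 : 0 ≤ r) (hr1 : r < 1)
    (h : ∀ k : ℕ, opNorm (M ^ k) ≤ C * r ^ k) :
    ∀ z ∈ spectrum ℂ (M.map ((↑) : ℝ → ℂ)), ‖z‖ < 1 := by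
  intro z hz
  set Mc := M.map ((↑) : ℝ → ℂ) with hMc
  rw [← AlgEquiv.spectrum_eq (Matrix.toLinAlgEquiv' (R := ℂ) (n := Fin n)) Mc] at hz
  have hev : Module.End.HasEigenvalue (Matrix.toLinAlgEquiv' Mc) z :=
    Module.End.hasEigenvalue_iff_mem_spectrum.mpr hz
  obtain ⟨v, hv⟩ := hev.exists_hasEigenvector
  have hMv : Mc *ᵥ v = z • v := by
    have := hv.apply_eq_smul
    rwa [Matrix.toLinAlgEquiv'_apply] at this
  have hpow : ∀ k : ℕ, (Mc ^ k) *ᵥ v = z ^ k • v := by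
    intro k
    induction k with
    | zero => simp [Matrix.one_mulVec]
    | succ k ih =>
      rw [pow_succ', ← Matrix.mulVec_mulVec, ih, Matrix.mulVec_smul, hMv, smul_smul, mul_comm (z ^ k) z, ← pow_succ']
  have hMck : ∀ k : ℕ, Mc ^ k = (M ^ k).map ((↑) : ℝ → ℂ) := by
    intro k
    have : Mc = (algebraMap ℝ ℂ).mapMatrix M := rfl
    rw [this, ← map_pow]
    rfl
  obtain ⟨i, hi⟩ : ∃ i, v i ≠ 0 := Function.ne_iff.mp hv.2
  have hvi : 0 < ‖v i‖ := norm_pos_iff.mpr hi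
  have key : ∀ k : ℕ, ‖z‖ ^ k * ‖v i‖ ≤ (n : ℝ) * (C * r ^ k * ‖v‖) := by
    intro k
    have h1 : ‖z‖ ^ k * ‖v i‖ = ‖((Mc ^ k) *ᵥ v) i‖ := by
      rw [hpow k]
      simp [norm_smul, norm_pow]
    rw [h1]
    have h2 : ((Mc ^ k) *ᵥ v) i = ∑ j, (Mc ^ k) i j * v j := by
      simp [Matrix.mulVec, dotProduct]
    rw [h2]
    refine le_trans (norm_sum_le _ _) ?_
    have h3 : ∀ j, ‖(Mc ^ k) i j * v j‖ ≤ C * r ^ k * ‖v‖ := by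
      intro j
      rw [norm_mul]
      have e1 : ‖(Mc ^ k) i j‖ ≤ C * r ^ k := by
        rw [hMck k]
        have : ‖((((M ^ k) i j : ℝ)) : ℂ)‖ = |(M ^ k) i j| := by
          simp [Complex.norm_real]
        calc ‖(((M ^ k).map ((↑) : ℝ → ℂ))) i j‖ = |(M ^ k) i j| := this
          _ ≤ opNorm (M ^ k) := abs_entry_le_opNorm _ i j
          _ ≤ C * r ^ k := h k
      have e2 : ‖v j‖ ≤ ‖v‖ := norm_le_pi_norm v j
      exact mul_le_mul e1 e2 (norm_nonneg _) (by positivity)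
    calc ∑ j, ‖(Mc ^ k) i j * v j‖ ≤ ∑ _j : Fin n, (C * r ^ k * ‖v‖) :=
          Finset.sum_le_sum (fun j _ => h3 j)
      _ = (n : ℝ) * (C * r ^ k * ‖v‖) := by
          rw [Finset.sum_const, Finset.card_univ, Fintype.card_fin, nsmul_eq_mul]
  -- conclude
  by_contra hcon
  push_neg at hcon
  set D : ℝ := (n : ℝ) * C * ‖v‖ / ‖v i‖ with hD
  have hD0 : 0 ≤ D := by positivity
  have hzk : ∀ k : ℕ, (1 : ℝ) ≤ D * r ^ k := by
    intro k
    have h1 : (1:ℝ) ≤ ‖z‖ ^ k := one_le_pow₀ hcon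
    have h2 : ‖z‖ ^ k ≤ D * r ^ k := by
      rw [hD, div_mul_eq_mul_div, le_div_iff₀ hvi]
      calc ‖z‖ ^ k * ‖v i‖ ≤ (n : ℝ) * (C * r ^ k * ‖v‖) := key k
        _ = (n : ℝ) * C * ‖v‖ * r ^ k := by ring
    linarith
  obtain ⟨k, hk⟩ := exists_pow_lt_of_lt_one (show (0:ℝ) < 1 / (D + 1) by positivity) hr1
  have := hzk k
  have hk2 : D * r ^ k < D * (1 / (D + 1)) + 1 / (D+1) := by
    nlinarith [pow_nonneg hr0 k]
  have : D * (1 / (D + 1)) + 1/(D+1) = 1 := by field_simp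
  linarith [hzk k]

/-- Robustness of exponential stability to perturbation of the feedback. -/
theorem robust_control {n d : ℕ}
    (A : Matrix (Fin n) (Fin n) ℝ) (B : Matrix (Fin n) (Fin d) ℝ)
    (K K₀ : Matrix (Fin d) (Fin n) ℝ) (τ ρ : ℝ)
    (hτ : 1 ≤ τ) (hρ : ρ ∈ Set.Ioo (0 : ℝ) 1)
    (hK₀ : ∀ k : ℕ, opNorm ((A + B * K₀) ^ k) ≤ τ * ρ ^ k)
    (hKK₀ : opNorm (K - K₀) ≤ (1 - ρ) / (2 * τ * opNorm B)) :
    (∀ k : ℕ, opNorm ((A + B * K) ^ k) ≤ τ * ((1 + ρ) / 2) ^ k) ∧ Stabilizes A B K := by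
  obtain ⟨hρ0, hρ1⟩ := hρ
  set r : ℝ := (1 + ρ) / 2 with hr
  have hρr : ρ ≤ r := by rw [hr]; linarith
  have hr1 : r < 1 := by rw [hr]; linarith
  have hr0 : 0 ≤ r := by linarith
  have hτ0 : 0 < τ := lt_of_lt_of_le zero_lt_one hτ
  set L₀ := A + B * K₀ with hL₀
  set E := B * (K - K₀) with hE
  have hsum : A + B * K = L₀ + E := by
    rw [hL₀, hE, Matrix.mul_sub]
    noncomm_ring
  have hBnn : 0 ≤ opNorm B := opNorm_nonneg B
  have hEbd : τ * opNorm E ≤ r - ρ := by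
    have h1 : opNorm E ≤ opNorm B * opNorm (K - K₀) := opNorm_mul_le _ _
    have hrρ : r - ρ = (1 - ρ) / 2 := by rw [hr]; ring
    rcases eq_or_lt_of_le hBnn with hB0 | hBpos
    · have : opNorm E ≤ 0 := by
        rw [← hB0] at h1
        simpa using h1
      nlinarith
    · have h2 : opNorm B * opNorm (K - K₀) ≤ opNorm B * ((1 - ρ) / (2 * τ * opNorm B)) :=
        mul_le_mul_of_nonneg_left hKK₀ hBnn
      have h3 : opNorm B * ((1 - ρ) / (2 * τ * opNorm B)) = (1 - ρ) / (2 * τ) := by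
        field_simp
      have h4 : opNorm E ≤ (1 - ρ) / (2 * τ) := by
        rw [← h3]; exact le_trans h1 h2
      have h5 : τ * opNorm E ≤ τ * ((1 - ρ) / (2 * τ)) :=
        mul_le_mul_of_nonneg_left h4 (le_of_lt hτ0)
      have h6 : τ * ((1 - ρ) / (2 * τ)) = (1 - ρ) / 2 := by
        field_simp
      rw [hrρ]
      rw [h6] at h5
      exact h5
  have hmain : ∀ k : ℕ, opNorm ((A + B * K) ^ k) ≤ τ * r ^ k := by
    intro k
    rw [hsum]
    exact pow_perturb_bound L₀ E τ ρ r hτ (le_of_lt hρ0) hρr hK₀ hEbd k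
  refine ⟨hmain, ?_⟩
  intro z hz
  exact norm_lt_one_of_pow_bound (A + B * K) τ r (le_of_lt hτ0) hr0 hr1 hmain z hz
end
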